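/- Let n ≥ 1, let k be an integer with 1 ≤ k ≤ n/2, let δ > 0 and p > 0, and let v = (v₁, …, vₙ) ∈ ℝⁿ with |v| = 1. Let J ⊆ {1, …, n} be a uniformly random subset of size k. Then 𝔼 (Σ_{j ∈ J} vⱼ²)^{p/2} ≤ 2k/(δ²n) + (k δ²)^{p/2}. -/

import Mathlib

open Real

lemma card_filter_mem_powersetCard (n k : ℕ) (hk : 1 ≤ k) (j : Fin n) :
    ((Finset.powersetCard k (Finset.univ : Finset (Fin n))).filter (fun J => j ∈ J)).card
      = (n - 1).choose (k - 1) := by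
  have := Finset.card_powersetCard (k - 1) ((Finset.univ : Finset (Fin n)).erase j)
  rw [Finset.card_erase_of_mem (Finset.mem_univ j), Finset.card_univ, Fintype.card_fin] at this
  rw [← this]
  apply Finset.card_nbij' (fun J => J.erase j) (fun A => insert j A)
  · intro J hJ
    simp only [Finset.mem_coe, Finset.mem_filter, Finset.mem_powersetCard] at hJ ⊢
    refine ⟨fun x hx => by simp [Finset.mem_erase.mp hx |>.1], ?_⟩
    rw [Finset.card_erase_of_mem hJ.2, hJ.1.2]
  · intro A hA
    simp only [Finset.mem_coe, Finset.mem_powersetCard, Finset.subset_erase] at hA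
    simp only [Finset.mem_coe, Finset.mem_filter, Finset.mem_powersetCard]
    refine ⟨⟨Finset.subset_univ _, ?_⟩, Finset.mem_insert_self _ _⟩
    rw [Finset.card_insert_of_notMem hA.1.2, hA.2, Nat.sub_add_cancel hk]
  · intro J hJ
    simp only [Finset.mem_coe, Finset.mem_filter] at hJ
    exact Finset.insert_erase hJ.2
  · intro A hA
    simp only [Finset.mem_coe, Finset.mem_powersetCard, Finset.subset_erase] at hA
    exact Finset.erase_insert hA.1.2

/-- For a unit vector `v ∈ ℝⁿ` and a uniformly random `k`-element subset
`J ⊆ {1,…,n}` (with `1 ≤ k ≤ n/2`, `δ > 0`, `p > 0`), one has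
`𝔼 (Σ_{j ∈ J} vⱼ²)^(p/2) ≤ 2k/(δ²n) + (kδ²)^(p/2)`.
The expectation is written as the average over `Finset.powersetCard k univ`. -/
theorem expected_truncated_projection_bound (n k : ℕ) (hn : 1 ≤ n) (hk : 1 ≤ k)
    (hkn : (k : ℝ) ≤ (n : ℝ) / 2) (δ p : ℝ) (hδ : 0 < δ) (hp : 0 < p)
    (v : EuclideanSpace ℝ (Fin n)) (hv : ‖v‖ = 1) :
    (∑ J ∈ Finset.powersetCard k (Finset.univ : Finset (Fin n)),
        (∑ j ∈ J, v j ^ 2) ^ (p / 2)) / (n.choose k : ℝ)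
      ≤ 2 * (k : ℝ) / (δ ^ 2 * n) + ((k : ℝ) * δ ^ 2) ^ (p / 2) := by
  set P := Finset.powersetCard k (Finset.univ : Finset (Fin n)) with hP
  have hkn' : k ≤ n := by
    have : (k : ℝ) ≤ (n : ℝ) := le_trans hkn (by
      have : (0:ℝ) ≤ n := Nat.cast_nonneg n
      linarith)
    exact_mod_cast this
  have hC : (0:ℝ) < (n.choose k : ℝ) := by exact_mod_cast Nat.choose_pos hkn'
  have hn' : (0:ℝ) < (n:ℝ) := by exact_mod_cast hn
  have hk' : (0:ℝ) < (k:ℝ) := by exact_mod_cast hk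
  -- total sum of squares is 1
  have hsum : ∑ j, v j ^ 2 = 1 := by
    have h := congrArg (· ^ 2) hv
    rw [EuclideanSpace.norm_eq] at h
    simp only [Real.norm_eq_abs, sq_abs] at h
    rw [Real.sq_sqrt (Finset.sum_nonneg fun i _ => sq_nonneg _)] at h
    simpa using h
  -- each inner sum is between 0 and 1
  have hterm0 : ∀ J ∈ P, (0:ℝ) ≤ ∑ j ∈ J, v j ^ 2 := fun J _ =>
    Finset.sum_nonneg fun j _ => sq_nonneg _
  have hterm1 : ∀ J ∈ P, (∑ j ∈ J, v j ^ 2) ≤ 1 := by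
    intro J hJ
    rw [← hsum]
    exact Finset.sum_le_sum_of_subset_of_nonneg (Finset.subset_univ J)
      (fun j _ _ => sq_nonneg _)
  -- double counting
  have htotal : ∑ J ∈ P, ∑ j ∈ J, v j ^ 2 = ((n-1).choose (k-1) : ℝ) := by
    have step1 : ∑ J ∈ P, ∑ j ∈ J, v j ^ 2
        = ∑ J ∈ P, ∑ j : Fin n, if j ∈ J then v j ^ 2 else 0 := by
      refine Finset.sum_congr rfl fun J _ => ?_
      rw [Finset.sum_ite_mem, Finset.univ_inter]
    have step2 : ∑ j : Fin n, ∑ J ∈ P, (if j ∈ J then v j ^ 2 else 0)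
        = ∑ j : Fin n, v j ^ 2 * ((P.filter (fun J => j ∈ J)).card : ℝ) := by
      refine Finset.sum_congr rfl fun j _ => ?_
      rw [← Finset.sum_filter, Finset.sum_const, nsmul_eq_mul, mul_comm]
    rw [step1, Finset.sum_comm, step2]
    simp_rw [hP, card_filter_mem_powersetCard n k hk]
    rw [← Finset.sum_mul, hsum, one_mul]
  -- choose identity : n * C(n-1,k-1) = k * C(n,k)
  have hchoose : (n:ℝ) * ((n-1).choose (k-1) : ℝ) = (k:ℝ) * (n.choose k : ℝ) := by
    have h := Nat.add_one_mul_choose_eq (n-1) (k-1)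
    simp only [Nat.succ_eq_add_one, Nat.sub_add_cancel hn, Nat.sub_add_cancel hk] at h
    exact_mod_cast h.trans (Nat.mul_comm _ _)
  set c : ℝ := ((k : ℝ) * δ ^ 2) ^ (p / 2) with hc
  have hc0 : 0 ≤ c := Real.rpow_nonneg (by positivity) _
  set bad := P.filter (fun J => (k:ℝ) * δ^2 < ∑ j ∈ J, v j ^ 2) with hbad
  -- Markov bound on bad count
  have hbadcard : (bad.card : ℝ) * ((k:ℝ) * δ^2) ≤ ((n-1).choose (k-1) : ℝ) := by
    rw [← htotal]
    calc (bad.card : ℝ) * ((k:ℝ) * δ^2)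
        ≤ ∑ J ∈ bad, ∑ j ∈ J, v j ^ 2 := by
          rw [← nsmul_eq_mul]
          exact Finset.card_nsmul_le_sum bad _ _
            (fun J hJ => le_of_lt (Finset.mem_filter.mp hJ).2)
      _ ≤ ∑ J ∈ P, ∑ j ∈ J, v j ^ 2 :=
          Finset.sum_le_sum_of_subset_of_nonneg (Finset.filter_subset _ _)
            (fun J hJ _ => hterm0 J hJ)
  have hbadfrac : (bad.card : ℝ) ≤ (n.choose k : ℝ) / ((n:ℝ) * δ^2) := by
    rw [le_div_iff₀ (by positivity)]
    have h3 := mul_le_mul_of_nonneg_left hbadcard hn'.le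
    nlinarith [h3, hchoose, hk', sq_nonneg δ]
  -- bound the numerator sum
  have hnum : ∑ J ∈ P, (∑ j ∈ J, v j ^ 2) ^ (p / 2)
      ≤ (bad.card : ℝ) + (n.choose k : ℝ) * c := by
    rw [← Finset.sum_filter_add_sum_filter_not P (fun J => (k:ℝ) * δ^2 < ∑ j ∈ J, v j ^ 2)]
    gcongr ?_ + ?_
    · calc ∑ J ∈ bad, (∑ j ∈ J, v j ^ 2) ^ (p / 2)
          ≤ ∑ J ∈ bad, 1 := by
            apply Finset.sum_le_sum
            intro J hJ
            have hJP := (Finset.mem_filter.mp hJ).1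
            exact Real.rpow_le_one (hterm0 J hJP) (hterm1 J hJP) (by positivity)
        _ = (bad.card : ℝ) := by simp
    · calc ∑ J ∈ P.filter (fun J => ¬ ((k:ℝ) * δ^2 < ∑ j ∈ J, v j ^ 2)),
            (∑ j ∈ J, v j ^ 2) ^ (p / 2)
          ≤ ∑ J ∈ P.filter (fun J => ¬ ((k:ℝ) * δ^2 < ∑ j ∈ J, v j ^ 2)), c := by
            apply Finset.sum_le_sum
            intro J hJ
            have h := Finset.mem_filter.mp hJ
            exact Real.rpow_le_rpow (hterm0 J h.1) (not_lt.mp h.2) (by positivity)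
        _ ≤ (n.choose k : ℝ) * c := by
            rw [Finset.sum_const, nsmul_eq_mul]
            have hPcard : P.card = n.choose k := by
              rw [hP, Finset.card_powersetCard, Finset.card_univ, Fintype.card_fin]
            gcongr
            · exact_mod_cast (Finset.card_le_card (Finset.filter_subset _ _)).trans hPcard.le
  -- combine
  have h1 : (∑ J ∈ P, (∑ j ∈ J, v j ^ 2) ^ (p / 2)) / (n.choose k : ℝ)
      ≤ ((bad.card : ℝ) + (n.choose k : ℝ) * c) / (n.choose k : ℝ) := by
    gcongr
  refine le_trans h1 ?_
  rw [add_div, mul_div_cancel_left₀ c (ne_of_gt hC)]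
  refine add_le_add_left ?_ c
  calc (bad.card : ℝ) / (n.choose k : ℝ)
      ≤ ((n.choose k : ℝ) / ((n:ℝ) * δ^2)) / (n.choose k : ℝ) := by gcongr
    _ = 1 / ((n:ℝ) * δ^2) := by field_simp
    _ ≤ 2 * (k:ℝ) / (δ^2 * (n:ℝ)) := by
        rw [div_le_div_iff₀ (by positivity) (by positivity)]
        have hk1 : (1:ℝ) ≤ (k:ℝ) := by exact_mod_cast hk
        have h2k : (1:ℝ) ≤ 2 * (k:ℝ) := by linarith
        nlinarith [mul_pos hn' (pow_pos hδ 2)]
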